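/- Let h ∈ C²(ℝ) solve h''(t) = W'(h(t)) for all t ∈ ℝ, with |h(t)| ≤ 1 for all t ∈ ℝ, and suppose that h is NOT both periodic and non-constant. Let σ ∈ {inf_ℝ h, sup_ℝ h}. Then there exists a constant C > 0, depending only on W, such that ∫_{−∞}^{+∞} ( |h'(t)|²/2 + W(h(t)) − W(σ) ) dt ≤ C. -/

import Mathlib

open MeasureTheory

/-- A double-well potential as in the paper: `W ∈ C²`, even, `W(±1) = 0 ≤ W`,
`W''(0) ≠ 0`, `W''(±1) ≠ 0`, and `W'(s) = 0` iff `s ∈ {−1, 0, +1}`. -/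
def DoubleWell (W : ℝ → ℝ) : Prop :=
  ContDiff ℝ 2 W ∧ (∀ r : ℝ, W (-r) = W r) ∧ W 1 = 0 ∧ W (-1) = 0 ∧ (∀ r : ℝ, 0 ≤ W r) ∧
    deriv (deriv W) 0 ≠ 0 ∧ deriv (deriv W) 1 ≠ 0 ∧ deriv (deriv W) (-1) ≠ 0 ∧
    (∀ s : ℝ, deriv W s = 0 ↔ s = -1 ∨ s = 0 ∨ s = 1)

open Set


lemma c2_facts {f : ℝ → ℝ} (hf : ContDiff ℝ 2 f) :
    Differentiable ℝ f ∧ Differentiable ℝ (deriv f) ∧ Continuous (deriv (deriv f)) := by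
  rw [show (2 : WithTop ℕ∞) = 1 + 1 from rfl, contDiff_succ_iff_deriv] at hf
  obtain ⟨h1, -, h2⟩ := hf
  rw [contDiff_one_iff_deriv] at h2
  exact ⟨h1, h2.1, h2.2⟩

lemma energy_const {W h : ℝ → ℝ} (hW : ContDiff ℝ 2 W) (hh : ContDiff ℝ 2 h)
    (hode : ∀ t, deriv (deriv h) t = deriv W (h t)) (t : ℝ) :
    (deriv h t)^2/2 - W (h t) = (deriv h 0)^2/2 - W (h 0) := by
  obtain ⟨hd1, hd2, -⟩ := c2_facts hh
  obtain ⟨hW1, hW2, -⟩ := c2_facts hW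
  have key : ∀ x, deriv (fun s => (deriv h s)^2/2 - W (h s)) x = 0 := by
    intro x
    have H1 : HasDerivAt (deriv h) (deriv W (h x)) x := by
      have := (hd2 x).hasDerivAt; rwa [hode x] at this
    have H2 : HasDerivAt (fun s => (deriv h s)^2/2) (deriv h x * deriv W (h x)) x := by
      have := (H1.pow 2).div_const 2
      rw [show deriv h x * deriv W (h x) = ↑2 * deriv h x ^ (2 - 1) * deriv W (h x) / 2 by push_cast; ring]; exact this
    have H3 : HasDerivAt (fun s => W (h s)) (deriv W (h x) * deriv h x) x :=
      (hW1 (h x)).hasDerivAt.comp x (hd1 x).hasDerivAt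
    have H4 := H2.sub H3
    show deriv ((fun s => deriv h s ^ 2 / 2) - fun s => W (h s)) x = 0
    rw [H4.deriv]; ring
  have hdiff : Differentiable ℝ (fun s => (deriv h s)^2/2 - W (h s)) :=
    ((hd2.pow 2).div_const 2).sub (hW1.comp hd1)
  exact is_const_of_deriv_eq_zero hdiff key t 0

lemma ode_reflection {W h : ℝ → ℝ} (hW : ContDiff ℝ 2 W) (hh : ContDiff ℝ 2 h)
    (hb : ∀ t, |h t| ≤ 1)
    (hode : ∀ t, deriv (deriv h) t = deriv W (h t)) {t₀ : ℝ} (h0 : deriv h t₀ = 0) :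
    ∀ t, h (2*t₀ - t) = h t := by
  obtain ⟨hd1, hd2, -⟩ := c2_facts hh
  obtain ⟨hW1, hWd, hWdd⟩ := c2_facts hW
  -- Lipschitz constant for deriv W on Icc (-1) 1
  obtain ⟨L0, hL0⟩ := (isCompact_Icc (a := (-1:ℝ)) (b := 1)).exists_bound_of_continuousOn
    hWdd.continuousOn
  set L : NNReal := ⟨max L0 0, le_max_right _ _⟩ with hLdef
  have hLip : LipschitzOnWith L (deriv W) (Icc (-1:ℝ) 1) := by
    apply (convex_Icc (-1:ℝ) 1).lipschitzOnWith_of_nnnorm_hasDerivWithin_le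
      (f' := deriv (deriv W)) (fun x _ => ((hWd x).hasDerivAt).hasDerivWithinAt)
    intro x hx
    have : ‖deriv (deriv W) x‖ ≤ max L0 0 := le_trans (hL0 x hx) (le_max_left _ _)
    exact_mod_cast this
  set K : NNReal := max 1 L with hKdef
  set v : ℝ × ℝ → ℝ × ℝ := fun p => (p.2, deriv W p.1) with hvdef
  set S : Set (ℝ × ℝ) := Icc (-1:ℝ) 1 ×ˢ (univ : Set ℝ) with hSdef
  have hv : LipschitzOnWith K v S := by
    rw [lipschitzOnWith_iff_dist_le_mul]
    intro p hp q hq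
    rw [Prod.dist_eq, Prod.dist_eq]
    have hd2' : dist p.2 q.2 ≤ max (dist p.1 q.1) (dist p.2 q.2) := le_max_right _ _
    have hd1' : dist p.1 q.1 ≤ max (dist p.1 q.1) (dist p.2 q.2) := le_max_left _ _
    have hK1 : (1:ℝ) ≤ (K:ℝ) := by exact_mod_cast le_max_left 1 L
    have hKL : (L:ℝ) ≤ (K:ℝ) := by exact_mod_cast le_max_right 1 L
    have hdnn : (0:ℝ) ≤ max (dist p.1 q.1) (dist p.2 q.2) := le_trans dist_nonneg hd1'
    apply max_le
    · calc dist (v p).1 (v q).1 = dist p.2 q.2 := rfl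
        _ ≤ 1 * max (dist p.1 q.1) (dist p.2 q.2) := by rw [one_mul]; exact hd2'
        _ ≤ (K:ℝ) * _ := by apply mul_le_mul_of_nonneg_right hK1 hdnn
    · have hpm : p.1 ∈ Icc (-1:ℝ) 1 := (Set.mem_prod.mp hp).1
      have hqm : q.1 ∈ Icc (-1:ℝ) 1 := (Set.mem_prod.mp hq).1
      calc dist (v p).2 (v q).2 = dist (deriv W p.1) (deriv W q.1) := rfl
        _ ≤ (L:ℝ) * dist p.1 q.1 := hLip.dist_le_mul _ hpm _ hqm
        _ ≤ (K:ℝ) * max (dist p.1 q.1) (dist p.2 q.2) := by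
            apply mul_le_mul hKL hd1' dist_nonneg (le_trans (by norm_num) hK1)
  set F : ℝ → ℝ × ℝ := fun t => (h t, deriv h t) with hFdef
  set G : ℝ → ℝ × ℝ := fun t => (h (2*t₀ - t), -deriv h (2*t₀ - t)) with hGdef
  have hFd : ∀ u : ℝ, HasDerivAt F (v (F u)) u := by
    intro u
    have := ((hd1 u).hasDerivAt.prodMk (hd2 u).hasDerivAt)
    rwa [hode u] at this
  have hGd : ∀ u : ℝ, HasDerivAt G (v (G u)) u := by
    intro u
    have ha : HasDerivAt (fun s : ℝ => 2*t₀ - s) (-1) u := by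
      simpa using (hasDerivAt_id u).const_sub (2*t₀)
    have c1 : HasDerivAt (fun s => h (2*t₀ - s)) (deriv h (2*t₀ - u) * (-1)) u :=
      (hd1 _).hasDerivAt.comp u ha
    have c2 : HasDerivAt (fun s => deriv h (2*t₀ - s)) (deriv (deriv h) (2*t₀ - u) * (-1)) u :=
      (hd2 _).hasDerivAt.comp u ha
    have c3 := (c2.neg)
    have := c1.prodMk c3
    rw [hode] at this
    convert this using 2 <;> simp [v] <;> ring
  have hmem : ∀ (u : ℝ) (p : ℝ × ℝ), p.1 ∈ Icc (-1:ℝ) 1 → p ∈ S := by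
    intro u p hp; exact Set.mem_prod.mpr ⟨hp, trivial⟩
  have hrange : ∀ t, h t ∈ Icc (-1:ℝ) 1 := fun t => by
    have := abs_le.mp (hb t); exact ⟨this.1, this.2⟩
  have claim : ∀ t, t₀ ≤ t → F t = G t := by
    intro t ht
    have init : F t₀ = G t₀ := by
      simp only [hFdef, hGdef, h0]
      rw [show 2*t₀ - t₀ = t₀ by ring]
      simp [h0]
    have := ODE_solution_unique_of_mem_Icc_right (v := fun _ : ℝ => v)
      (s := fun _ : ℝ => S) (K := K) (fun _ _ => hv)
      (f := F) (g := G) (a := t₀) (b := t)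
      (((hh.continuous).prodMk hd2.continuous).continuousOn)
      (fun u _ => (hFd u).hasDerivWithinAt)
      (fun u _ => hmem u (F u) (hrange u))
      (((hh.continuous.comp (continuous_const.sub continuous_id)).prodMk
        ((hd2.continuous.comp (continuous_const.sub continuous_id)).neg)).continuousOn)
      (fun u _ => (hGd u).hasDerivWithinAt)
      (fun u _ => hmem u (G u) (hrange _))
      init
    exact this ⟨ht, le_refl t⟩
  intro t
  rcases le_total t₀ t with ht | ht
  · exact (congrArg Prod.fst (claim t ht)).symm
  · have ht' : t₀ ≤ 2*t₀ - t := by linarith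
    have := congrArg Prod.fst (claim (2*t₀ - t) ht')
    simp only [hFdef, hGdef] at this
    rw [show 2*t₀ - (2*t₀ - t) = t by ring] at this
    exact this

/-- There is a constant `C > 0` depending only on `W` such that: if
`h ∈ C²(ℝ)` solves `h'' = W'(h)` with `|h| ≤ 1`, and `h` is NOT both periodic and
non-constant, then for `σ ∈ {inf_ℝ h, sup_ℝ h}` one has
`∫_{−∞}^{+∞} (|h'|²/2 + W(h) − W(σ)) ≤ C`. -/
theorem energy_integral_bound (W : ℝ → ℝ) (hW : DoubleWell W) :
    ∃ C > (0 : ℝ), ∀ h : ℝ → ℝ, ContDiff ℝ 2 h → (∀ t : ℝ, |h t| ≤ 1) →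
      (∀ t : ℝ, deriv (deriv h) t = deriv W (h t)) →
      ¬ ((∃ T > (0 : ℝ), ∀ t : ℝ, h (t + T) = h t) ∧ ¬ (∃ c : ℝ, ∀ t : ℝ, h t = c)) →
      ∀ σ : ℝ, (σ = sInf (Set.range h) ∨ σ = sSup (Set.range h)) →
      ∫⁻ t : ℝ, ENNReal.ofReal ((deriv h t) ^ 2 / 2 + W (h t) - W σ) ≤ ENNReal.ofReal C := by
  obtain ⟨hWc2, hWeven, hW1pt, hWm1, hWpos, -, -, -, hWcrit⟩ := hW
  have hWcont : Continuous W := hWc2.continuous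
  obtain ⟨x0, hx0mem, hx0⟩ := (isCompact_Icc (a := (-1:ℝ)) (b := 1)).exists_isMaxOn
    ⟨-1, Set.left_mem_Icc.mpr (by norm_num)⟩ hWcont.continuousOn
  set M : ℝ := W x0 with hMdef
  have hM0 : 0 ≤ M := hWpos x0
  set C₀ : ℝ := 4 * Real.sqrt (2 * M) with hC₀def
  have hC₀nn : 0 ≤ C₀ := by positivity
  refine ⟨C₀ + 1, by positivity, ?_⟩
  intro h hh hb hode hnp σ hσ
  by_cases hc : ∃ c : ℝ, ∀ t : ℝ, h t = c
  · -- constant case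
    obtain ⟨c, hc⟩ := hc
    have hhe : h = fun _ => c := funext hc
    have hrange : Set.range h = {c} := by rw [hhe]; exact Set.range_const
    have hσc : σ = c := by rcases hσ with rfl | rfl <;> rw [hrange] <;> simp
    have hzero : ∀ t : ℝ, (deriv h t) ^ 2 / 2 + W (h t) - W σ = 0 := by
      intro t; rw [hσc, hhe]; simp
    simp only [hzero, ENNReal.ofReal_zero, lintegral_zero]
    exact zero_le
  · -- nonconstant case
    have hper : ¬ ∃ T > (0:ℝ), ∀ t : ℝ, h (t + T) = h t := fun hT => hnp ⟨hT, hc⟩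
    obtain ⟨hd1, hd2, -⟩ := c2_facts hh
    set d : ℝ → ℝ := deriv h with hddef
    have hdc : Continuous d := hd2.continuous
    obtain ⟨K, hK⟩ : ∃ K : ℝ, ∀ t, (d t) ^ 2 / 2 - W (h t) = K :=
      ⟨(d 0) ^ 2 / 2 - W (h 0), fun t => energy_const hWc2 hh hode t⟩
    have hKW : ∀ t, (d t) ^ 2 = 2 * (W (h t) + K) := fun t => by have := hK t; linarith
    -- all zeros of d coincide
    have hzuniq : ∀ s t : ℝ, d s = 0 → d t = 0 → s = t := by
      intro s t hs ht
      by_contra hne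
      have hrs := ode_reflection hWc2 hh hb hode hs
      have hrt := ode_reflection hWc2 hh hb hode ht
      rcases lt_or_gt_of_ne hne with hlt | hlt
      · refine hper ⟨2 * (t - s), by linarith, fun u => ?_⟩
        calc h (u + 2 * (t - s)) = h (2 * t - (2 * s - u)) := by
              rw [show u + 2 * (t - s) = 2 * t - (2 * s - u) by ring]
          _ = h (2 * s - u) := hrt _
          _ = h u := hrs u
      · refine hper ⟨2 * (s - t), by linarith, fun u => ?_⟩
        calc h (u + 2 * (s - t)) = h (2 * s - (2 * t - u)) := by
              rw [show u + 2 * (s - t) = 2 * s - (2 * t - u) by ring]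
          _ = h (2 * t - u) := hrs _
          _ = h u := hrt u
    -- K ≤ 0
    have hKle : K ≤ 0 := by
      by_contra hKpos
      push_neg at hKpos
      have hne : ∀ x, d x ≠ 0 := by
        intro x hx
        have h1 := hKW x; rw [hx] at h1
        have h2 := hWpos (h x); nlinarith
      have hsign : (∀ x, 0 < d x) ∨ (∀ x, d x < 0) := by
        by_contra hcon
        push_neg at hcon
        obtain ⟨⟨x, hx⟩, ⟨y, hy⟩⟩ := hcon
        have hx' : d x ≤ 0 := hx
        have hy' : 0 ≤ d y := hy
        have hxn : d x < 0 := lt_of_le_of_ne hx' (hne x)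
        have hyp : 0 < d y := lt_of_le_of_ne hy' (Ne.symm (hne y))
        have h0m : (0:ℝ) ∈ uIcc (d x) (d y) :=
          Set.mem_uIcc.mpr (Or.inl ⟨le_of_lt hxn, le_of_lt hyp⟩)
        obtain ⟨z, -, hz⟩ := intermediate_value_uIcc hdc.continuousOn h0m
        exact hne z hz
      set c : ℝ := Real.sqrt (2 * K) with hcdef
      have hcpos : 0 < c := Real.sqrt_pos.mpr (by linarith)
      have hsq : ∀ x, c ≤ |d x| := by
        intro x
        rw [← Real.sqrt_sq_eq_abs]
        apply Real.sqrt_le_sqrt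
        have h1 := hKW x; have h2 := hWpos (h x); nlinarith
      have hb0 := abs_le.mp (hb 0)
      have hbt := abs_le.mp (hb (4 / c))
      have hc4 : c * (4 / c) = 4 := by field_simp
      rcases hsign with hp | hp
      · have hD : ∀ x : ℝ, HasDerivAt (fun t => h t - c * t) (d x - c) x := by
          intro x
          have hlin : HasDerivAt (fun t : ℝ => c * t) c x := by
            simpa using (hasDerivAt_id x).const_mul c
          exact (hd1 x).hasDerivAt.sub hlin
        have hmono : Monotone (fun t => h t - c * t) := by
          apply monotone_of_deriv_nonneg (fun x => (hD x).differentiableAt)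
          intro x
          rw [(hD x).deriv]
          have := hsq x; rw [abs_of_pos (hp x)] at this; linarith
        have h2 : h 0 - c * 0 ≤ h (4 / c) - c * (4 / c) :=
          hmono (le_of_lt (by positivity : (0:ℝ) < 4 / c))
        rw [mul_zero, hc4] at h2
        linarith
      · have hD : ∀ x : ℝ, HasDerivAt (fun t => -(h t) - c * t) (-(d x) - c) x := by
          intro x
          have hlin : HasDerivAt (fun t : ℝ => c * t) c x := by
            simpa using (hasDerivAt_id x).const_mul c
          exact ((hd1 x).hasDerivAt.neg).sub hlin
        have hmono : Monotone (fun t => -(h t) - c * t) := by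
          apply monotone_of_deriv_nonneg (fun x => (hD x).differentiableAt)
          intro x
          rw [(hD x).deriv]
          have := hsq x; rw [abs_of_neg (hp x)] at this; linarith
        have h2 : -(h 0) - c * 0 ≤ -(h (4 / c)) - c * (4 / c) :=
          hmono (le_of_lt (by positivity : (0:ℝ) < 4 / c))
        rw [mul_zero, hc4] at h2
        linarith
    -- the square-root function
    set g : ℝ → ℝ := fun u => Real.sqrt (2 * (W u + K)) with hgdef
    have hgc : Continuous g :=
      Real.continuous_sqrt.comp (continuous_const.mul (hWcont.add continuous_const))
    have hgabs : ∀ t, g (h t) = |d t| := by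
      intro t
      rw [hgdef]
      simp only
      rw [← hKW t, Real.sqrt_sq_eq_abs]
    have hWM : ∀ u ∈ Icc (-1:ℝ) 1, W u ≤ M := fun u hu => hx0 hu
    have hgb : ∀ u ∈ Icc (-1:ℝ) 1, ‖g u‖ ≤ Real.sqrt (2 * M) := by
      intro u hu
      rw [Real.norm_eq_abs, abs_of_nonneg (Real.sqrt_nonneg _)]
      apply Real.sqrt_le_sqrt
      have := hWM u hu; linarith
    -- bound on a sign-constant interval
    have ibnd : ∀ a b : ℝ, a ≤ b →
        ((∀ t ∈ Icc a b, 0 ≤ d t) ∨ (∀ t ∈ Icc a b, d t ≤ 0)) →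
        ∫ t in a..b, (d t) ^ 2 ≤ 2 * Real.sqrt (2 * M) := by
      intro a b hab hsgn
      have hcov : ∫ t in a..b, d t • g (h t) = ∫ u in (h a)..(h b), g u := by
        have := intervalIntegral.integral_comp_smul_deriv (f := h) (f' := d) (g := g)
          (a := a) (b := b) (fun x _ => (hd1 x).hasDerivAt) hdc.continuousOn hgc
        simpa [Function.comp] using this
      have hIb : ‖∫ u in (h a)..(h b), g u‖ ≤ Real.sqrt (2 * M) * |h b - h a| := by
        apply intervalIntegral.norm_integral_le_of_norm_le_const
        intro u hu
        apply hgb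
        have h1 := abs_le.mp (hb a); have h2 := abs_le.mp (hb b)
        rcases Set.mem_uIoc.mp hu with ⟨hl, hr⟩ | ⟨hl, hr⟩
        · exact ⟨by linarith, by linarith⟩
        · exact ⟨by linarith, by linarith⟩
      have habs : |h b - h a| ≤ 2 := by
        have h1 := abs_le.mp (hb a); have h2 := abs_le.mp (hb b)
        apply abs_le.mpr; constructor <;> linarith
      have hIb2 : |∫ u in (h a)..(h b), g u| ≤ 2 * Real.sqrt (2 * M) := by
        rw [← Real.norm_eq_abs]
        calc ‖∫ u in (h a)..(h b), g u‖ ≤ Real.sqrt (2 * M) * |h b - h a| := hIb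
          _ ≤ Real.sqrt (2 * M) * 2 := by
              apply mul_le_mul_of_nonneg_left habs (Real.sqrt_nonneg _)
          _ = 2 * Real.sqrt (2 * M) := by ring
      rcases hsgn with hs | hs
      · have heq : EqOn (fun t => (d t) ^ 2) (fun t => d t • g (h t)) (uIcc a b) := by
          intro t ht
          rw [uIcc_of_le hab] at ht
          simp only [smul_eq_mul]
          rw [hgabs t, abs_of_nonneg (hs t ht)]; ring
        calc ∫ t in a..b, (d t) ^ 2 = ∫ t in a..b, d t • g (h t) :=
              intervalIntegral.integral_congr heq
          _ ≤ |∫ u in (h a)..(h b), g u| := by rw [hcov]; exact le_abs_self _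
          _ ≤ 2 * Real.sqrt (2 * M) := hIb2
      · have heq : EqOn (fun t => (d t) ^ 2) (fun t => -(d t • g (h t))) (uIcc a b) := by
          intro t ht
          rw [uIcc_of_le hab] at ht
          simp only [smul_eq_mul]
          rw [hgabs t, abs_of_nonpos (hs t ht)]; ring
        calc ∫ t in a..b, (d t) ^ 2 = ∫ t in a..b, -(d t • g (h t)) :=
              intervalIntegral.integral_congr heq
          _ = -∫ t in a..b, d t • g (h t) := intervalIntegral.integral_neg
          _ ≤ |∫ u in (h a)..(h b), g u| := by rw [hcov]; exact neg_le_abs _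
          _ ≤ 2 * Real.sqrt (2 * M) := hIb2
    -- intermediate value tool
    have ivt : ∀ u v : ℝ, d u < 0 → 0 < d v →
        ∃ z ∈ uIcc u v, z ≠ u ∧ z ≠ v ∧ d z = 0 := by
      intro u v hu hv
      have h0m : (0:ℝ) ∈ uIcc (d u) (d v) :=
        Set.mem_uIcc.mpr (Or.inl ⟨le_of_lt hu, le_of_lt hv⟩)
      obtain ⟨z, hzm, hz⟩ := intermediate_value_uIcc hdc.continuousOn h0m
      refine ⟨z, hzm, fun e => ?_, fun e => ?_, hz⟩
      · rw [e] at hz; linarith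
      · rw [e] at hz; linarith
    have signcase : ∀ a b : ℝ,
        (∀ u ∈ Icc a b, ∀ v ∈ Icc a b, d u < 0 → 0 < d v → False) →
        (∀ t ∈ Icc a b, 0 ≤ d t) ∨ (∀ t ∈ Icc a b, d t ≤ 0) := by
      intro a b hsep
      by_contra hcon
      push_neg at hcon
      obtain ⟨⟨u, hu, hu'⟩, ⟨w, hw, hw'⟩⟩ := hcon
      exact hsep u hu w hw (by linarith) (by linarith)
    -- main bound on any interval
    have intbnd : ∀ a b : ℝ, a ≤ b → ∫ t in a..b, (d t) ^ 2 ≤ C₀ := by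
      intro a b hab
      have hsqnn : 0 ≤ Real.sqrt (2 * M) := Real.sqrt_nonneg _
      by_cases hz : ∃ z ∈ Icc a b, d z = 0
      · obtain ⟨z, hzm, hz0⟩ := hz
        have hint1 : IntervalIntegrable (fun t => (d t) ^ 2) volume a z :=
          ((hdc.pow 2).intervalIntegrable _ _)
        have hint2 : IntervalIntegrable (fun t => (d t) ^ 2) volume z b :=
          ((hdc.pow 2).intervalIntegrable _ _)
        have hsplit := intervalIntegral.integral_add_adjacent_intervals hint1 hint2
        have b1 : ∫ t in a..z, (d t) ^ 2 ≤ 2 * Real.sqrt (2 * M) := by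
          apply ibnd a z hzm.1
          apply signcase a z
          intro u hu v hv hun hvp
          obtain ⟨w, hwm, hwu, hwv, hw0⟩ := ivt u v hun hvp
          have hwz : w = z := hzuniq w z hw0 hz0
          subst hwz
          rw [Set.mem_uIcc] at hwm
          rcases hwm with ⟨h1, h2⟩ | ⟨h1, h2⟩
          · exact hwv (le_antisymm h2 hv.2)
          · exact hwu (le_antisymm h2 hu.2)
        have b2 : ∫ t in z..b, (d t) ^ 2 ≤ 2 * Real.sqrt (2 * M) := by
          apply ibnd z b hzm.2
          apply signcase z b
          intro u hu v hv hun hvp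
          obtain ⟨w, hwm, hwu, hwv, hw0⟩ := ivt u v hun hvp
          have hwz : w = z := hzuniq w z hw0 hz0
          subst hwz
          rw [Set.mem_uIcc] at hwm
          rcases hwm with ⟨h1, h2⟩ | ⟨h1, h2⟩
          · exact hwu (le_antisymm hu.1 h1)
          · exact hwv (le_antisymm hv.1 h1)
        rw [hC₀def, ← hsplit]
        linarith
      · push_neg at hz
        have hbase := ibnd a b hab (signcase a b (fun u hu v hv hun hvp => by
          obtain ⟨w, hwm, -, -, hw0⟩ := ivt u v hun hvp
          have hwin : w ∈ Icc a b := by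
            rw [Set.mem_uIcc] at hwm
            rcases hwm with ⟨h1, h2⟩ | ⟨h1, h2⟩
            · exact ⟨le_trans hu.1 h1, le_trans h2 hv.2⟩
            · exact ⟨le_trans hv.1 h1, le_trans h2 hu.2⟩
          exact hz w hwin hw0))
        rw [hC₀def]
        linarith
    -- W σ + K ≥ 0
    have hσK : 0 ≤ W σ + K := by
      have hne : (Set.range h).Nonempty := ⟨h 0, Set.mem_range_self 0⟩
      have hcl : σ ∈ closure (Set.range h) := by
        rcases hσ with rfl | rfl
        · apply csInf_mem_closure hne
          exact ⟨-1, by rintro y ⟨t, rfl⟩; exact (abs_le.mp (hb t)).1⟩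
        · apply csSup_mem_closure hne
          exact ⟨1, by rintro y ⟨t, rfl⟩; exact (abs_le.mp (hb t)).2⟩
      have hclosed : IsClosed {u : ℝ | 0 ≤ W u + K} :=
        isClosed_le continuous_const (hWcont.add continuous_const)
      have hsub : Set.range h ⊆ {u : ℝ | 0 ≤ W u + K} := by
        rintro y ⟨t, rfl⟩
        have h1 := hK t; have h2 := sq_nonneg (d t)
        simp only [Set.mem_setOf_eq]; linarith
      exact closure_minimal hsub hclosed hcl
    have hpt : ∀ t, (deriv h t) ^ 2 / 2 + W (h t) - W σ ≤ (d t) ^ 2 := by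
      intro t; have := hK t; rw [← hddef]; linarith
    -- lintegral computation
    have hmeas : Measurable fun t => ENNReal.ofReal ((d t) ^ 2) :=
      ENNReal.measurable_ofReal.comp ((hdc.pow 2).measurable)
    have hmain : ∫⁻ t : ℝ, ENNReal.ofReal ((d t) ^ 2) ≤ ENNReal.ofReal C₀ := by
      have hpointwise : (fun t => ENNReal.ofReal ((d t) ^ 2)) =
          fun t => ⨆ n : ℕ, (Icc (-(n:ℝ)) n).indicator
            (fun s => ENNReal.ofReal ((d s) ^ 2)) t := by
        funext t
        apply le_antisymm
        · obtain ⟨n, hn⟩ := exists_nat_ge |t|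
          have htm : t ∈ Icc (-(n:ℝ)) n := ⟨(abs_le.mp hn).1, (abs_le.mp hn).2⟩
          exact le_iSup_of_le n (by rw [Set.indicator_of_mem htm])
        · exact iSup_le fun n => Set.indicator_le_self _ _ t
      rw [hpointwise, lintegral_iSup (fun n => hmeas.indicator measurableSet_Icc)
        (fun m n hmn => Set.indicator_le_indicator_of_subset
          (Icc_subset_Icc (neg_le_neg (Nat.cast_le.mpr hmn)) (Nat.cast_le.mpr hmn))
          (fun a => zero_le))]
      apply iSup_le
      intro n
      rw [lintegral_indicator measurableSet_Icc]
      have hnn : (-(n:ℝ)) ≤ n := le_trans (neg_nonpos.mpr n.cast_nonneg) n.cast_nonneg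
      have hint : IntegrableOn (fun t => (d t) ^ 2) (Icc (-(n:ℝ)) n) :=
        (hdc.pow 2).continuousOn.integrableOn_Icc
      rw [← ofReal_integral_eq_lintegral_ofReal hint
        (Filter.Eventually.of_forall fun t => sq_nonneg _)]
      apply ENNReal.ofReal_le_ofReal
      rw [MeasureTheory.integral_Icc_eq_integral_Ioc, ← intervalIntegral.integral_of_le hnn]
      exact intbnd _ _ hnn
    calc ∫⁻ t : ℝ, ENNReal.ofReal ((deriv h t) ^ 2 / 2 + W (h t) - W σ)
        ≤ ∫⁻ t : ℝ, ENNReal.ofReal ((d t) ^ 2) :=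
          lintegral_mono fun t => ENNReal.ofReal_le_ofReal (hpt t)
      _ ≤ ENNReal.ofReal C₀ := hmain
      _ ≤ ENNReal.ofReal (C₀ + 1) := ENNReal.ofReal_le_ofReal (by linarith)
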